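/- If ⊢ e : t is derivable in λ•→ with empty typing context (e closed) and e is normalizing (e reduces in zero or more steps to a normal form), then t ≠ •^∞. -/

import Mathlib

namespace LambdaBullet

/-- Head constructors for pseudo-types. -/
inductive TyHead : Type
  | var (n : ℕ)
  | nat
  | prod
  | arrow
  | bullet

/-- Arity of each pseudo-type constructor. -/
def tyArity : TyHead → Type
  | .var _ => Empty
  | .nat => Empty
  | .prod => Bool
  | .arrow => Bool
  | .bullet => Unit

/-- The polynomial functor whose M-type is the type of pseudo-types. -/
def TyP : PFunctor := ⟨TyHead, tyArity⟩

/-- Pseudo-types: possibly infinite coinductively generated trees. -/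
abbrev PseudoType := TyP.M

/-- Type variable. -/
def tvar (n : ℕ) : PseudoType := PFunctor.M.mk ⟨TyHead.var n, Empty.elim⟩
/-- The type `Nat`. -/
def tnat : PseudoType := PFunctor.M.mk ⟨TyHead.nat, Empty.elim⟩
/-- Product type. -/
def tprod (t s : PseudoType) : PseudoType :=
  PFunctor.M.mk ⟨TyHead.prod, fun b => bif b then s else t⟩
/-- Arrow type. -/
def tarrow (t s : PseudoType) : PseudoType :=
  PFunctor.M.mk ⟨TyHead.arrow, fun b => bif b then s else t⟩
/-- Delay type `•t`. -/
def tbullet (t : PseudoType) : PseudoType :=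
  PFunctor.M.mk ⟨TyHead.bullet, fun _ => t⟩
/-- Iterated delay `•ⁿ t`. -/
def tbulletN (n : ℕ) (t : PseudoType) : PseudoType := tbullet^[n] t

/-- `Child t s` holds iff `s` is an immediate subtree of `t`. -/
def Child (t s : PseudoType) : Prop := ∃ b : TyP.B t.dest.1, t.dest.2 b = s

/-- `Subtree t s` holds iff `s` is a subtree of `t`. -/
def Subtree (t s : PseudoType) : Prop := Relation.ReflTransGen Child t s

/-- A pseudo-type is regular if it has finitely many distinct subtrees. -/
def Regular (t : PseudoType) : Prop := {s | Subtree t s}.Finite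

/-- The root of the tree is a `•`. -/
def headIsBullet (t : PseudoType) : Prop := t.dest.1 = TyHead.bullet

/-- A pseudo-type is guarded if every infinite path in its tree has
infinitely many `•`'s. -/
def Guarded (t : PseudoType) : Prop :=
  ∀ f : ℕ → PseudoType, f 0 = t → (∀ n, Child (f n) (f (n + 1))) →
    ∀ N, ∃ n, N ≤ n ∧ headIsBullet (f n)

/-- A type is a regular and guarded pseudo-type. -/
def IsType (t : PseudoType) : Prop := Regular t ∧ Guarded t

/-- `•^∞`: the unique pseudo-type satisfying `•^∞ = • •^∞`. -/
def binf : PseudoType := PFunctor.M.corec (fun _ : Unit => ⟨TyHead.bullet, fun _ => ()⟩) ()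

/-- Constants. -/
inductive Const : Type
  | pair
  | cfst
  | csnd
  | zero
  | succ

/-- Expressions (with de Bruijn indices for variables). -/
inductive Expr : Type
  | var (x : ℕ)
  | const (k : Const)
  | lam (e : Expr)
  | app (e₁ e₂ : Expr)

def liftRen (f : ℕ → ℕ) : ℕ → ℕ
  | 0 => 0
  | n + 1 => f n + 1

def rename (f : ℕ → ℕ) : Expr → Expr
  | .var n => .var (f n)
  | .const k => .const k
  | .lam e => .lam (rename (liftRen f) e)
  | .app a b => .app (rename f a) (rename f b)

def liftSub (ρ : ℕ → Expr) : ℕ → Expr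
  | 0 => .var 0
  | n + 1 => rename Nat.succ (ρ n)

/-- Simultaneous (capture-avoiding) substitution. -/
def substE (ρ : ℕ → Expr) : Expr → Expr
  | .var n => ρ n
  | .const k => .const k
  | .lam e => .lam (substE (liftSub ρ) e)
  | .app a b => .app (substE ρ a) (substE ρ b)

/-- `subst0 e f` is `e[f/x]` for the topmost variable `x`. -/
def subst0 (e f : Expr) : Expr :=
  substE (fun n => match n with | 0 => f | n + 1 => .var n) e

/-- The pair `⟨e₁, e₂⟩`. -/
def mkPair (e₁ e₂ : Expr) : Expr := .app (.app (.const .pair) e₁) e₂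

/-- Evaluation contexts E ::= [] | E e | fst E | snd E | succ E. -/
inductive ECtx : Type
  | hole
  | app (E : ECtx) (e : Expr)
  | fst (E : ECtx)
  | snd (E : ECtx)
  | succ (E : ECtx)

/-- Plugging an expression into an evaluation context. -/
def ECtx.plug : ECtx → Expr → Expr
  | .hole, e => e
  | .app E f, e => .app (E.plug e) f
  | .fst E, e => .app (.const .cfst) (E.plug e)
  | .snd E, e => .app (.const .csnd) (E.plug e)
  | .succ E, e => .app (.const .succ) (E.plug e)

/-- Head reduction rules. -/
inductive HeadRed : Expr → Expr → Prop
  | beta (e f) : HeadRed (.app (.lam e) f) (subst0 e f)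
  | fst (e₁ e₂) : HeadRed (.app (.const .cfst) (mkPair e₁ e₂)) e₁
  | snd (e₁ e₂) : HeadRed (.app (.const .csnd) (mkPair e₁ e₂)) e₂

/-- Weak head (call-by-name) reduction: head rules closed under evaluation contexts. -/
def Red (a b : Expr) : Prop :=
  ∃ (E : ECtx) (e f : Expr), HeadRed e f ∧ a = E.plug e ∧ b = E.plug f

/-- Many-step reduction. -/
def RedStar : Expr → Expr → Prop := Relation.ReflTransGen Red

/-- (Weak head) normal forms. -/
def NormalForm (e : Expr) : Prop := ∀ f, ¬ Red e f

/-- Typing contexts: finite maps from (de Bruijn) variables to types. -/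
def Ctx : Type := ℕ → Option PseudoType

/-- Extending a typing context with a type for the topmost variable. -/
def Ctx.cons (t : PseudoType) (Γ : Ctx) : Ctx :=
  fun n => match n with | 0 => some t | n + 1 => Γ n

/-- The type assignment κ for constants. -/
inductive KappaTy : Const → PseudoType → Prop
  | pair {t s} : IsType t → IsType s →
      KappaTy .pair (tarrow t (tarrow s (tprod t s)))
  | fst {t s} : IsType t → IsType s →
      KappaTy .cfst (tarrow (tprod t s) t)
  | snd {t s} : IsType t → IsType s →
      KappaTy .csnd (tarrow (tprod t s) s)
  | zero : KappaTy .zero tnat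
  | succ : KappaTy .succ (tarrow tnat tnat)

/-- The type assignment system λ•→. -/
inductive Types : Ctx → Expr → PseudoType → Prop
  | ax {Γ x t} : Γ x = some t → IsType t → Types Γ (.var x) t
  | const {Γ k t} : KappaTy k t → Types Γ (.const k) t
  | bulletI {Γ e t} : Types Γ e t → Types Γ e (tbullet t)
  | arrowI {Γ e n t s} :
      Types (Ctx.cons (tbulletN n t) Γ) e (tbulletN n s) →
      Types Γ (.lam e) (tbulletN n (tarrow t s))
  | arrowE {Γ e₁ e₂ n t s} :
      Types Γ e₁ (tbulletN n (tarrow t s)) → Types Γ e₂ (tbulletN n t) →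
      Types Γ (.app e₁ e₂) (tbulletN n s)


/-! ### Basic facts about pseudo-types -/

lemma tbulletN_zero (t : PseudoType) : tbulletN 0 t = t := rfl

lemma tbulletN_succ (n : ℕ) (t : PseudoType) :
    tbulletN (n + 1) t = tbullet (tbulletN n t) :=
  Function.iterate_succ_apply' _ _ _

lemma tbulletN_add (k n : ℕ) (t : PseudoType) :
    tbulletN (k + n) t = tbulletN k (tbulletN n t) :=
  Function.iterate_add_apply _ _ _ _

lemma dest_tbullet (t : PseudoType) :
    (tbullet t).dest = ⟨TyHead.bullet, fun _ => t⟩ := PFunctor.M.dest_mk _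

lemma dest_tarrow (t s : PseudoType) :
    (tarrow t s).dest = ⟨TyHead.arrow, fun b => bif b then s else t⟩ := PFunctor.M.dest_mk _

lemma dest_tprod (t s : PseudoType) :
    (tprod t s).dest = ⟨TyHead.prod, fun b => bif b then s else t⟩ := PFunctor.M.dest_mk _

lemma dest_tnat : (tnat : PseudoType).dest = ⟨TyHead.nat, Empty.elim⟩ := PFunctor.M.dest_mk _

lemma dest_binf : binf.dest = ⟨TyHead.bullet, fun _ => binf⟩ := by
  have := PFunctor.M.dest_corec (fun _ : Unit => (⟨TyHead.bullet, fun _ => ()⟩ : TyP.Obj Unit)) ()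
  exact this

lemma binf_eq : binf = tbullet binf := by
  conv_lhs => rw [← PFunctor.M.mk_dest binf, dest_binf]
  rfl

lemma tbullet_inj {a b : PseudoType} (h : tbullet a = tbullet b) : a = b := by
  have h2 := congrArg PFunctor.M.dest h
  rw [dest_tbullet, dest_tbullet] at h2
  have h3 : (fun _ : Unit => a) = (fun _ => b) := by
    have : (⟨TyHead.bullet, fun _ => a⟩ : Σ h, tyArity h → PseudoType) = ⟨TyHead.bullet, fun _ => b⟩ := h2
    injection this
  exact congrFun h3 ()

lemma tarrow_inj {a b c d : PseudoType} (h : tarrow a b = tarrow c d) : a = c ∧ b = d := by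
  have h2 := congrArg PFunctor.M.dest h
  rw [dest_tarrow, dest_tarrow] at h2
  have h3 : (fun x : Bool => bif x then b else a) = (fun x => bif x then d else c) := by
    have : (⟨TyHead.arrow, fun x => bif x then b else a⟩ : Σ h, tyArity h → PseudoType) = ⟨TyHead.arrow, fun x => bif x then d else c⟩ := h2
    injection this
  exact ⟨congrFun h3 false, congrFun h3 true⟩

lemma tprod_inj {a b c d : PseudoType} (h : tprod a b = tprod c d) : a = c ∧ b = d := by
  have h2 := congrArg PFunctor.M.dest h
  rw [dest_tprod, dest_tprod] at h2
  have h3 : (fun x : Bool => bif x then b else a) = (fun x => bif x then d else c) := by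
    have : (⟨TyHead.prod, fun x => bif x then b else a⟩ : Σ h, tyArity h → PseudoType) = ⟨TyHead.prod, fun x => bif x then d else c⟩ := h2
    injection this
  exact ⟨congrFun h3 false, congrFun h3 true⟩

/-- Stripping bullets: if the cores have non-bullet heads, depths and cores agree. -/
lemma tbulletN_inj {x y : PseudoType} (hx : x.dest.1 ≠ TyHead.bullet)
    (hy : y.dest.1 ≠ TyHead.bullet) :
    ∀ {n m : ℕ}, tbulletN n x = tbulletN m y → n = m ∧ x = y := by
  intro n
  induction n with
  | zero =>
    intro m h
    cases m with
    | zero => exact ⟨rfl, h⟩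
    | succ m =>
      rw [tbulletN_zero, tbulletN_succ] at h
      exact absurd (by rw [h, dest_tbullet]) hx
  | succ n ih =>
    intro m h
    cases m with
    | zero =>
      rw [tbulletN_zero, tbulletN_succ] at h
      exact absurd (by rw [← h, dest_tbullet]) hy
    | succ m =>
      rw [tbulletN_succ, tbulletN_succ] at h
      obtain ⟨h1, h2⟩ := ih (tbullet_inj h)
      exact ⟨by omega, h2⟩

lemma tbulletN_ne_binf {x : PseudoType} (hx : x.dest.1 ≠ TyHead.bullet) :
    ∀ n, tbulletN n x ≠ binf := by
  intro n
  induction n with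
  | zero =>
    intro h
    rw [tbulletN_zero] at h
    exact hx (by rw [h, dest_binf])
  | succ n ih =>
    intro h
    rw [tbulletN_succ, binf_eq] at h
    exact ih (tbullet_inj h)

lemma head_tarrow (t s : PseudoType) : (tarrow t s).dest.1 = TyHead.arrow := by
  rw [dest_tarrow]
lemma head_tprod (t s : PseudoType) : (tprod t s).dest.1 = TyHead.prod := by
  rw [dest_tprod]
lemma head_tnat : (tnat : PseudoType).dest.1 = TyHead.nat := by rw [dest_tnat]

lemma head_tarrow_ne (t s : PseudoType) : (tarrow t s).dest.1 ≠ TyHead.bullet := by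
  rw [head_tarrow]; intro h; cases h
lemma head_tprod_ne (t s : PseudoType) : (tprod t s).dest.1 ≠ TyHead.bullet := by
  rw [head_tprod]; intro h; cases h
lemma head_tnat_ne : (tnat : PseudoType).dest.1 ≠ TyHead.bullet := by
  rw [head_tnat]; intro h; cases h

lemma heads_eq {x y : PseudoType} (h : x = y) : x.dest.1 = y.dest.1 := by rw [h]

lemma tprod_ne_tarrow {a b c d : PseudoType} : tprod a b ≠ tarrow c d := by
  intro h
  have := heads_eq h
  rw [head_tprod, head_tarrow] at this
  cases this

lemma tarrow_ne_tnat {a b : PseudoType} : tarrow a b ≠ tnat := by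
  intro h
  have := heads_eq h
  rw [head_tarrow, head_tnat] at this
  cases this

lemma tprod_ne_tnat {a b : PseudoType} : tprod a b ≠ tnat := by
  intro h
  have := heads_eq h
  rw [head_tprod, head_tnat] at this
  cases this
/-! ### IsType closed under bullet -/

lemma child_tbullet {t s : PseudoType} (h : Child (tbullet t) s) : s = t := by
  obtain ⟨b, hb⟩ := h
  revert b hb
  rw [dest_tbullet]
  intro b hb
  exact hb.symm

lemma isType_tbullet {t : PseudoType} (h : IsType t) : IsType (tbullet t) := by
  obtain ⟨hr, hg⟩ := h
  constructor
  · apply Set.Finite.subset (hr.insert (tbullet t))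
    intro s hs
    rcases Relation.ReflTransGen.cases_head hs with h0 | ⟨c, hc, hcs⟩
    · exact Or.inl h0.symm
    · right
      rw [child_tbullet hc] at hcs
      exact hcs
  · intro f hf0 hstep N
    have hg' := hg (fun n => f (n + 1)) ?_ (fun n => hstep (n + 1)) N
    · obtain ⟨n, hn, hb⟩ := hg'
      exact ⟨n + 1, by omega, hb⟩
    · have := hstep 0
      rw [hf0] at this
      exact child_tbullet this

/-! ### Bullet-lifting of typing judgments -/

def mapB (Γ : Ctx) : Ctx := fun n => (Γ n).map tbullet

lemma mapB_cons (u : PseudoType) (Γ : Ctx) :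
    mapB (Ctx.cons u Γ) = Ctx.cons (tbullet u) (mapB Γ) := by
  funext n
  cases n <;> rfl

lemma types_bullet {Γ : Ctx} {e : Expr} {u : PseudoType} (h : Types Γ e u) :
    Types (mapB Γ) e (tbullet u) := by
  induction h with
  | @ax Γ x t hx ht =>
      exact Types.ax (show mapB Γ x = some (tbullet t) by simp [mapB, hx]) (isType_tbullet ht)
  | const hk => exact Types.bulletI (Types.const hk)
  | bulletI h ih => exact Types.bulletI ih
  | @arrowI Γ e n t s h ih =>
      rw [mapB_cons, ← tbulletN_succ, ← tbulletN_succ] at ih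
      rw [← tbulletN_succ]
      exact Types.arrowI ih
  | @arrowE Γ e₁ e₂ n t s h1 h2 ih1 ih2 =>
      rw [← tbulletN_succ] at ih1 ih2
      rw [← tbulletN_succ]
      exact Types.arrowE ih1 ih2
lemma mapB_iter_cons (k : ℕ) (u : PseudoType) (Γ : Ctx) :
    mapB^[k] (Ctx.cons u Γ) = Ctx.cons (tbulletN k u) (mapB^[k] Γ) := by
  induction k generalizing u Γ with
  | zero => rfl
  | succ k ih =>
      rw [Function.iterate_succ_apply, Function.iterate_succ_apply, mapB_cons, ih]
      congr 1

lemma types_bulletN {Γ : Ctx} {e : Expr} {u : PseudoType} (h : Types Γ e u) (k : ℕ) :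
    Types (mapB^[k] Γ) e (tbulletN k u) := by
  induction k with
  | zero => exact h
  | succ k ih =>
      rw [Function.iterate_succ_apply', tbulletN_succ]
      exact types_bullet ih

/-- Empty typing context. -/
def emptyCtx : Ctx := fun _ => none

lemma mapB_empty : mapB emptyCtx = emptyCtx := rfl

lemma mapB_iter_empty (k : ℕ) : mapB^[k] emptyCtx = emptyCtx := by
  induction k with
  | zero => rfl
  | succ k ih => rw [Function.iterate_succ_apply, mapB_empty, ih]

/-! ### Renaming and substitution lemmas -/

lemma types_rename {Γ : Ctx} {e : Expr} {u : PseudoType} (h : Types Γ e u) :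
    ∀ {Δ : Ctx} {f : ℕ → ℕ}, (∀ x t', Γ x = some t' → Δ (f x) = some t') →
    Types Δ (rename f e) u := by
  induction h with
  | ax hx ht => exact fun hf => Types.ax (hf _ _ hx) ht
  | const hk => exact fun _ => Types.const hk
  | bulletI h ih => exact fun hf => Types.bulletI (ih hf)
  | @arrowI Γ e n t s h ih =>
      intro Δ f hf
      refine Types.arrowI (ih ?_)
      intro x t' hx
      cases x with
      | zero => exact hx
      | succ x => exact hf x t' hx
  | arrowE h1 h2 ih1 ih2 => exact fun hf => Types.arrowE (ih1 hf) (ih2 hf)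

lemma types_subst {Γ : Ctx} {e : Expr} {u : PseudoType} (h : Types Γ e u) :
    ∀ {Δ : Ctx} {ρ : ℕ → Expr}, (∀ x t', Γ x = some t' → IsType t' → Types Δ (ρ x) t') →
    Types Δ (substE ρ e) u := by
  induction h with
  | ax hx ht => exact fun hρ => hρ _ _ hx ht
  | const hk => exact fun _ => Types.const hk
  | bulletI h ih => exact fun hρ => Types.bulletI (ih hρ)
  | @arrowI Γ e n t s h ih =>
      intro Δ ρ hρ
      refine Types.arrowI (ih ?_)
      intro x t' hx hty
      cases x with
      | zero =>
          cases hx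
          exact Types.ax rfl hty
      | succ x =>
          exact types_rename (hρ x t' hx hty) (fun y s hy => hy)
  | arrowE h1 h2 ih1 ih2 => exact fun hρ => Types.arrowE (ih1 hρ) (ih2 hρ)
/-! ### Inversion lemmas -/

lemma var_inv {Γ : Ctx} {e0 : Expr} {u : PseudoType} (h : Types Γ e0 u) :
    ∀ x, e0 = .var x → ∃ m t', u = tbulletN m t' ∧ Γ x = some t' := by
  induction h with
  | ax hx ht =>
      intro y hE
      injection hE with h1
      subst h1
      exact ⟨0, _, rfl, hx⟩
  | const hk => intro y hE; cases hE
  | bulletI h ih =>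
      intro y hE
      obtain ⟨m, t', hu, hx⟩ := ih y hE
      exact ⟨m + 1, t', by rw [tbulletN_succ, hu], hx⟩
  | arrowI h ih => intro y hE; cases hE
  | arrowE h1 h2 ih1 ih2 => intro y hE; cases hE

lemma const_inv {Γ : Ctx} {e0 : Expr} {u : PseudoType} (h : Types Γ e0 u) :
    ∀ k, e0 = .const k → ∃ m t', u = tbulletN m t' ∧ KappaTy k t' := by
  induction h with
  | ax hx ht => intro k hE; cases hE
  | const hk =>
      intro k' hE
      injection hE with h1
      subst h1
      exact ⟨0, _, rfl, hk⟩
  | bulletI h ih =>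
      intro k hE
      obtain ⟨m, t', hu, hk⟩ := ih k hE
      exact ⟨m + 1, t', by rw [tbulletN_succ, hu], hk⟩
  | arrowI h ih => intro k hE; cases hE
  | arrowE h1 h2 ih1 ih2 => intro k hE; cases hE

lemma app_inv {Γ : Ctx} {e0 : Expr} {u : PseudoType} (h : Types Γ e0 u) :
    ∀ a b, e0 = .app a b → ∃ n t s, u = tbulletN n s ∧
      Types Γ a (tbulletN n (tarrow t s)) ∧ Types Γ b (tbulletN n t) := by
  induction h with
  | ax hx ht => intro a b hE; cases hE
  | const hk => intro a b hE; cases hE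
  | bulletI h ih =>
      intro a b hE
      obtain ⟨n, t, s, hu, h1, h2⟩ := ih a b hE
      refine ⟨n + 1, t, s, by rw [tbulletN_succ, hu], ?_, ?_⟩ <;>
        rw [tbulletN_succ] <;> exact Types.bulletI (by assumption)
  | arrowI h ih => intro a b hE; cases hE
  | @arrowE Γ e₁ e₂ n t s h1 h2 ih1 ih2 =>
      intro a b hE
      injection hE with hE1 hE2
      subst hE1; subst hE2
      exact ⟨n, t, s, rfl, h1, h2⟩

lemma lam_inv {Γ : Ctx} {e0 : Expr} {u : PseudoType} (h : Types Γ e0 u) :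
    ∀ e, e0 = .lam e → ∃ k n t s, u = tbulletN k (tbulletN n (tarrow t s)) ∧
      Types (Ctx.cons (tbulletN n t) Γ) e (tbulletN n s) := by
  induction h with
  | ax hx ht => intro e hE; cases hE
  | const hk => intro e hE; cases hE
  | bulletI h ih =>
      intro e hE
      obtain ⟨k, n, t, s, hu, hb⟩ := ih e hE
      exact ⟨k + 1, n, t, s, by rw [tbulletN_succ, hu], hb⟩
  | @arrowI Γ e' n t s h ih =>
      intro e hE
      injection hE with hE1
      subst hE1
      exact ⟨0, n, t, s, rfl, h⟩
  | arrowE h1 h2 ih1 ih2 => intro e hE; cases hE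
/-! ### Subject reduction -/

lemma mkPair_inv {Γ : Ctx} {u : PseudoType} {e₁ e₂ : Expr}
    (h : Types Γ (mkPair e₁ e₂) u) :
    ∃ n c d, u = tbulletN n (tprod c d) ∧
      Types Γ e₁ (tbulletN n c) ∧ Types Γ e₂ (tbulletN n d) := by
  obtain ⟨n₁, t₁, s₁, hu, h1, h2⟩ := app_inv h _ _ rfl
  obtain ⟨n₂, t₂, s₂, hu2, h3, h4⟩ := app_inv h1 _ _ rfl
  obtain ⟨m, t', hu3, hk⟩ := const_inv h3 _ rfl
  cases hk with
  | @pair c d hc hd =>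
    obtain ⟨hnm, harr⟩ := tbulletN_inj (head_tarrow_ne _ _) (head_tarrow_ne _ _) hu3
    obtain ⟨ht₂, hs₂⟩ := tarrow_inj harr
    subst hnm; subst ht₂; subst hs₂
    obtain ⟨hnn, harr2⟩ := tbulletN_inj (head_tarrow_ne _ _) (head_tarrow_ne _ _) hu2
    obtain ⟨ht₁, hs₁⟩ := tarrow_inj harr2
    subst hnn; subst ht₁; subst hs₁
    exact ⟨n₁, _, _, hu, h4, h2⟩

lemma headred_preserve {e f : Expr} {u : PseudoType} (hr : HeadRed e f)
    (h : Types emptyCtx e u) : Types emptyCtx f u := by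
  cases hr with
  | beta e₁ e₂ =>
      obtain ⟨n, t, s, hu, hlam, harg⟩ := app_inv h _ _ rfl
      obtain ⟨k, n', t', s', heq, hbody⟩ := lam_inv hlam _ rfl
      rw [← tbulletN_add] at heq
      obtain ⟨hn, harr⟩ := tbulletN_inj (head_tarrow_ne _ _) (head_tarrow_ne _ _) heq
      obtain ⟨ht, hs⟩ := tarrow_inj harr
      subst hn; subst ht; subst hs
      have hb2 := types_bulletN hbody k
      rw [mapB_iter_cons, mapB_iter_empty, ← tbulletN_add, ← tbulletN_add] at hb2
      rw [hu]
      refine types_subst hb2 ?_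
      intro x tx hx hty
      cases x with
      | zero =>
          cases hx
          exact harg
      | succ x => cases hx
  | fst e₁ e₂ =>
      obtain ⟨n, t, s, hu, hfst, harg⟩ := app_inv h _ _ rfl
      obtain ⟨m, t', hu3, hk⟩ := const_inv hfst _ rfl
      cases hk with
      | @fst a b ha hb =>
        obtain ⟨hnm, harr⟩ := tbulletN_inj (head_tarrow_ne _ _) (head_tarrow_ne _ _) hu3
        obtain ⟨ht, hs⟩ := tarrow_inj harr
        rw [ht] at harg
        obtain ⟨n', c, d, hp, hp1, hp2⟩ := mkPair_inv harg
        obtain ⟨hnn, hpr⟩ := tbulletN_inj (head_tprod_ne _ _) (head_tprod_ne _ _) hp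
        obtain ⟨hc, hd⟩ := tprod_inj hpr
        rw [hu, hs, hc, hnn]
        exact hp1
  | snd e₁ e₂ =>
      obtain ⟨n, t, s, hu, hfst, harg⟩ := app_inv h _ _ rfl
      obtain ⟨m, t', hu3, hk⟩ := const_inv hfst _ rfl
      cases hk with
      | @snd a b ha hb =>
        obtain ⟨hnm, harr⟩ := tbulletN_inj (head_tarrow_ne _ _) (head_tarrow_ne _ _) hu3
        obtain ⟨ht, hs⟩ := tarrow_inj harr
        rw [ht] at harg
        obtain ⟨n', c, d, hp, hp1, hp2⟩ := mkPair_inv harg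
        obtain ⟨hnn, hpr⟩ := tbulletN_inj (head_tprod_ne _ _) (head_tprod_ne _ _) hp
        obtain ⟨hc, hd⟩ := tprod_inj hpr
        rw [hu, hs, hd, hnn]
        exact hp2

lemma plug_preserve {e f : Expr} (hr : HeadRed e f) :
    ∀ (E : ECtx) {u : PseudoType}, Types emptyCtx (E.plug e) u →
      Types emptyCtx (E.plug f) u := by
  intro E
  induction E with
  | hole => exact fun h => headred_preserve hr h
  | app E g ih =>
      intro u h
      obtain ⟨n, t, s, hu, h1, h2⟩ := app_inv h _ _ rfl
      rw [hu]
      exact Types.arrowE (ih h1) h2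
  | fst E ih =>
      intro u h
      obtain ⟨n, t, s, hu, h1, h2⟩ := app_inv h _ _ rfl
      rw [hu]
      exact Types.arrowE h1 (ih h2)
  | snd E ih =>
      intro u h
      obtain ⟨n, t, s, hu, h1, h2⟩ := app_inv h _ _ rfl
      rw [hu]
      exact Types.arrowE h1 (ih h2)
  | succ E ih =>
      intro u h
      obtain ⟨n, t, s, hu, h1, h2⟩ := app_inv h _ _ rfl
      rw [hu]
      exact Types.arrowE h1 (ih h2)

lemma red_preserve {a b : Expr} {u : PseudoType} (hr : Red a b)
    (h : Types emptyCtx a u) : Types emptyCtx b u := by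
  obtain ⟨E, e, f, hhr, ha, hb⟩ := hr
  subst ha; subst hb
  exact plug_preserve hhr E h

lemma redstar_preserve {a b : Expr} {u : PseudoType} (hr : RedStar a b)
    (h : Types emptyCtx a u) : Types emptyCtx b u := by
  induction hr with
  | refl => exact h
  | tail _ hstep ih => exact red_preserve hstep ih
/-! ### Shapes of closed normal forms -/

lemma red_app_left {a a' b : Expr} (hr : Red a a') : Red (.app a b) (.app a' b) := by
  obtain ⟨E, e, f, h, ha, ha'⟩ := hr
  exact ⟨E.app b, e, f, h, by rw [ha]; rfl, by rw [ha']; rfl⟩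

lemma red_fst_arg {b b' : Expr} (hr : Red b b') :
    Red (.app (.const .cfst) b) (.app (.const .cfst) b') := by
  obtain ⟨E, e, f, h, hb, hb'⟩ := hr
  exact ⟨E.fst, e, f, h, by rw [hb]; rfl, by rw [hb']; rfl⟩

lemma red_snd_arg {b b' : Expr} (hr : Red b b') :
    Red (.app (.const .csnd) b) (.app (.const .csnd) b') := by
  obtain ⟨E, e, f, h, hb, hb'⟩ := hr
  exact ⟨E.snd, e, f, h, by rw [hb]; rfl, by rw [hb']; rfl⟩

lemma nf_app_left {a b : Expr} (h : NormalForm (.app a b)) : NormalForm a :=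
  fun a' ha' => h _ (red_app_left ha')

lemma nf_fst_arg {b : Expr} (h : NormalForm (.app (.const .cfst) b)) : NormalForm b :=
  fun b' hb' => h _ (red_fst_arg hb')

lemma nf_snd_arg {b : Expr} (h : NormalForm (.app (.const .csnd) b)) : NormalForm b :=
  fun b' hb' => h _ (red_snd_arg hb')

lemma red_beta (e b : Expr) : Red (.app (.lam e) b) (subst0 e b) :=
  ⟨.hole, _, _, HeadRed.beta e b, rfl, rfl⟩

lemma red_fst_pair (p q : Expr) : Red (.app (.const .cfst) (mkPair p q)) p :=
  ⟨.hole, _, _, HeadRed.fst p q, rfl, rfl⟩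

lemma red_snd_pair (p q : Expr) : Red (.app (.const .csnd) (mkPair p q)) q :=
  ⟨.hole, _, _, HeadRed.snd p q, rfl, rfl⟩

lemma kappa_head {k : Const} {t' : PseudoType} (h : KappaTy k t') :
    t'.dest.1 = TyHead.arrow ∨ t'.dest.1 = TyHead.nat := by
  cases h <;> simp [head_tarrow, head_tnat] <;> rfl

lemma kappa_head_ne {k : Const} {t' : PseudoType} (h : KappaTy k t') :
    t'.dest.1 ≠ TyHead.bullet := by
  rcases kappa_head h with h' | h' <;> rw [h'] <;> intro hc <;> cases hc

lemma kappa_head_ne_prod {k : Const} {t' : PseudoType} (h : KappaTy k t') :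
    t'.dest.1 ≠ TyHead.prod := by
  rcases kappa_head h with h' | h' <;> rw [h'] <;> intro hc <;> cases hc

/-- Main structural lemma about closed normal forms. -/
lemma nf_shape : ∀ (f : Expr) (u : PseudoType), Types emptyCtx f u → NormalForm f →
    (u ≠ binf) ∧
    (∀ n c d, u = tbulletN n (tprod c d) → ∃ p q, f = mkPair p q) ∧
    (∀ a b, f = .app a b → ∀ n t s, u = tbulletN n (tarrow t s) →
      ∃ p, f = .app (.const .pair) p) := by
  intro f
  induction f with
  | var x =>
      intro u h hnf
      obtain ⟨m, t', _, hx⟩ := var_inv h x rfl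
      cases hx
  | const k =>
      intro u h hnf
      obtain ⟨m, t', hu, hk⟩ := const_inv h k rfl
      refine ⟨?_, ?_, ?_⟩
      · rw [hu]; exact tbulletN_ne_binf (kappa_head_ne hk) m
      · intro n c d hup
        rw [hup] at hu
        obtain ⟨_, hx⟩ := tbulletN_inj (head_tprod_ne _ _) (kappa_head_ne hk) hu
        exact absurd (by rw [← hx, head_tprod]) (kappa_head_ne_prod hk)
      · intro a b hE; cases hE
  | lam e ih =>
      intro u h hnf
      obtain ⟨k, n, t, s, hu, _⟩ := lam_inv h e rfl
      rw [← tbulletN_add] at hu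
      refine ⟨?_, ?_, ?_⟩
      · rw [hu]; exact tbulletN_ne_binf (head_tarrow_ne _ _) _
      · intro n' c d hup
        rw [hup] at hu
        obtain ⟨_, hx⟩ := tbulletN_inj (head_tprod_ne _ _) (head_tarrow_ne _ _) hu
        exact absurd hx tprod_ne_tarrow
      · intro a b hE; cases hE
  | app a b iha ihb =>
      intro u h hnf
      obtain ⟨n, t, s, hu, ha, hb⟩ := app_inv h a b rfl
      have nfa : NormalForm a := nf_app_left hnf
      -- helper to finish once we know `u = tbulletN n X` with X = arrow/prod/nat core
      cases a with
      | var x =>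
          obtain ⟨m, t', _, hx⟩ := var_inv ha x rfl
          cases hx
      | lam e =>
          exact absurd (red_beta e b) (by intro hr; exact hnf _ hr)
      | const k =>
          obtain ⟨m, t', heq, hk⟩ := const_inv ha k rfl
          cases hk with
          | @pair c d hc hd =>
              obtain ⟨hnm, harr⟩ := tbulletN_inj (head_tarrow_ne _ _) (head_tarrow_ne _ _) heq
              obtain ⟨ht, hs⟩ := tarrow_inj harr
              rw [hs] at hu
              refine ⟨?_, ?_, ?_⟩
              · rw [hu]; exact tbulletN_ne_binf (head_tarrow_ne _ _) _
              · intro n' c' d' hup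
                rw [hup] at hu
                obtain ⟨_, hx⟩ := tbulletN_inj (head_tprod_ne _ _) (head_tarrow_ne _ _) hu
                exact absurd hx tprod_ne_tarrow
              · intro _ _ _ _ _ _ _
                exact ⟨b, rfl⟩
          | @fst c d hc hd =>
              obtain ⟨hnm, harr⟩ := tbulletN_inj (head_tarrow_ne _ _) (head_tarrow_ne _ _) heq
              obtain ⟨ht, hs⟩ := tarrow_inj harr
              rw [ht] at hb
              have nfb : NormalForm b := nf_fst_arg hnf
              obtain ⟨p, q, hpq⟩ := (ihb _ hb nfb).2.1 n c d rfl
              rw [hpq] at hnf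
              exact absurd (red_fst_pair p q) (hnf _)
          | @snd c d hc hd =>
              obtain ⟨hnm, harr⟩ := tbulletN_inj (head_tarrow_ne _ _) (head_tarrow_ne _ _) heq
              obtain ⟨ht, hs⟩ := tarrow_inj harr
              rw [ht] at hb
              have nfb : NormalForm b := nf_snd_arg hnf
              obtain ⟨p, q, hpq⟩ := (ihb _ hb nfb).2.1 n c d rfl
              rw [hpq] at hnf
              exact absurd (red_snd_pair p q) (hnf _)
          | zero =>
              obtain ⟨_, hx⟩ := tbulletN_inj (head_tarrow_ne _ _) head_tnat_ne heq
              exact absurd hx tarrow_ne_tnat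
          | succ =>
              obtain ⟨hnm, harr⟩ := tbulletN_inj (head_tarrow_ne _ _) (head_tarrow_ne _ _) heq
              obtain ⟨ht, hs⟩ := tarrow_inj harr
              rw [hs] at hu
              refine ⟨?_, ?_, ?_⟩
              · rw [hu]; exact tbulletN_ne_binf head_tnat_ne _
              · intro n' c' d' hup
                rw [hup] at hu
                obtain ⟨_, hx⟩ := tbulletN_inj (head_tprod_ne _ _) head_tnat_ne hu
                exact absurd hx tprod_ne_tnat
              · intro _ _ _ n' t' s' hup
                rw [hup] at hu
                obtain ⟨_, hx⟩ := tbulletN_inj (head_tarrow_ne _ _) head_tnat_ne hu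
                exact absurd hx tarrow_ne_tnat
      | app a1 a2 =>
          obtain ⟨p, hp⟩ := (iha _ ha nfa).2.2 a1 a2 rfl n t s rfl
          rw [hp] at ha
          obtain ⟨n₁, t₁, s₁, heq1, hpairc, hparg⟩ := app_inv ha _ _ rfl
          obtain ⟨m, t', heq2, hk⟩ := const_inv hpairc _ rfl
          cases hk with
          | @pair c d hc hd =>
              obtain ⟨hnm, harr⟩ := tbulletN_inj (head_tarrow_ne _ _) (head_tarrow_ne _ _) heq2
              obtain ⟨ht₁, hs₁⟩ := tarrow_inj harr
              rw [hs₁] at heq1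
              obtain ⟨hnn, harr2⟩ := tbulletN_inj (head_tarrow_ne _ _) (head_tarrow_ne _ _) heq1
              obtain ⟨ht, hs⟩ := tarrow_inj harr2
              rw [hs] at hu
              refine ⟨?_, ?_, ?_⟩
              · rw [hu]; exact tbulletN_ne_binf (head_tprod_ne _ _) _
              · intro n' c' d' hup
                exact ⟨p, b, by rw [hp]; rfl⟩
              · intro _ _ _ n' t'' s'' hup
                rw [hup] at hu
                obtain ⟨_, hx⟩ := tbulletN_inj (head_tarrow_ne _ _) (head_tprod_ne _ _) hu
                exact absurd hx (Ne.symm tprod_ne_tarrow)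

/-- if `⊢ e : t` (empty context) and `e` is normalizing then
`t ≠ •^∞`. -/
theorem normalizing_type_ne_binf (e : Expr) (t : PseudoType)
    (h : Types (fun _ => none) e t)
    (hn : ∃ f, RedStar e f ∧ NormalForm f) :
    t ≠ binf := by
  rintro rfl
  obtain ⟨f, hstar, hnf⟩ := hn
  have hf : Types emptyCtx f binf := redstar_preserve hstar h
  exact (nf_shape f binf hf hnf).1 rfl

end LambdaBullet
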